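/- Suppose X : [0, 1/2] → ℝ and B : [0, 1/2] → ℝ are continuous functions with B_0 = 0 and X_0 = a for some a ∈ [0,1), such that X_t = a − ∫_0^t 1/(2 X_s) ds + B_t whenever X_s > 0 for all s ≤ t. If sup_{t ∈ [0,1/2]} B_t < 1 − a and B_{1/2} ≤ −a, then there exists t ∈ [0, 1/2] with X_t = 0. -/
import Mathlib


open Set

/-- Deterministic statement: if `X` solves `X t = a - ∫₀ᵗ 1/(2 Xₛ) ds + B t`
as long as it stays positive, starts at `a ∈ [0, 1)`, the driving path
satisfies `sup_{[0,1/2]} B < 1 - a` and `B (1/2) ≤ -a`, then `X` hits `0`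
on `[0, 1/2]`. -/
theorem stmt4 (X B : ℝ → ℝ)
    (hX : ContinuousOn X (Icc 0 (1/2)))
    (hB : ContinuousOn B (Icc 0 (1/2))) (hB0 : B 0 = 0)
    (a : ℝ) (ha : a ∈ Ico (0:ℝ) 1) (hX0 : X 0 = a)
    (heq : ∀ t ∈ Icc (0:ℝ) (1/2), (∀ s ∈ Icc (0:ℝ) t, 0 < X s) →
      X t = a - (∫ s in (0:ℝ)..t, 1 / (2 * X s)) + B t)
    (hBsup : ∀ t ∈ Icc (0:ℝ) (1/2), B t < 1 - a)
    (hBhalf : B (1/2) ≤ -a) :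
    ∃ t ∈ Icc (0:ℝ) (1/2), X t = 0 := by
  by_contra h
  push_neg at h
  have h0 : (0:ℝ) ∈ Icc (0:ℝ) (1/2) := by norm_num
  have hapos : 0 < a := by
    rcases lt_or_eq_of_le ha.1 with h' | h'
    · exact h'
    · exact absurd (hX0.trans h'.symm) (h 0 h0)
  have hpos : ∀ s ∈ Icc (0:ℝ) (1/2), 0 < X s := by
    intro s hs
    rcases lt_or_ge 0 (X s) with h' | h'
    · exact h'
    · exfalso
      -- X s ≤ 0 < X 0, so by IVT X hits 0 on [0, s]
      have hsub : Icc (0:ℝ) s ⊆ Icc (0:ℝ) (1/2) := Icc_subset_Icc le_rfl hs.2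
      have := intermediate_value_Icc' hs.1 (hX.mono hsub)
      have h0mem : (0:ℝ) ∈ Icc (X s) (X 0) := ⟨h', by rw [hX0]; exact hapos.le⟩
      obtain ⟨t, ht, hXt⟩ := this h0mem
      exact h t (hsub ht) hXt
  have hhalf : (1/2 : ℝ) ∈ Icc (0:ℝ) (1/2) := by norm_num
  have key := heq (1/2) hhalf (fun s hs => hpos s (Icc_subset_Icc le_rfl (by norm_num) hs))
  have hint : 0 ≤ ∫ s in (0:ℝ)..(1/2), 1 / (2 * X s) := by
    apply intervalIntegral.integral_nonneg (by norm_num)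
    intro u hu
    have := hpos u (Icc_subset_Icc le_rfl (by norm_num) hu)
    positivity
  have : X (1/2) ≤ 0 := by
    rw [key]
    linarith
  exact absurd this (not_le.mpr (hpos (1/2) hhalf))
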